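/- Fix n > 2 and perplexity ρ ∈ (1, n−1). For every ε > 0 and every pair of outputs Y, Y' ∈ IM_ρ (i.e., Y and Y' are each stationary t-SNE outputs of some n-point dataset), there exist n-point datasets X = {x_1,…,x_n} and X' = {x'_1,…,x'_n} in ℝ^{n−1} such that for all i ≠ j, 1 − ε ≤ ‖x_i − x_j‖² / ‖x'_i − x'_j‖² ≤ 1 + ε, and yet Y ∈ TSNE_ρ(X) and Y' ∈ TSNE_ρ(X'). -/

import Mathlib

open scoped BigOperators RealInnerProductSpace
noncomputable section

namespace TSNEPaper

variable {n k : ℕ} {E F : Type*}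

/-- The set of nearest neighbors of point `i` (used for the `σ = 0` limit of the
conditional affinity). -/
def nearestSet [NormedAddCommGroup E] (X : Fin n → E) (i : Fin n) : Finset (Fin n) :=
  (Finset.univ.erase i).filter fun j => ∀ l ∈ Finset.univ.erase i, ‖X i - X j‖ ≤ ‖X i - X l‖

/-- Conditional t-SNE affinity `P_{j|i}(X; σ)`.  For `σ = 0` we take the limiting value
as `σ → 0⁺`, which puts equal mass on the nearest neighbors of `i`. -/
def condAffinity [NormedAddCommGroup E] (X : Fin n → E) (σ : ℝ) (i j : Fin n) : ℝ :=
  if j = i then 0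
  else if σ = 0 then (if j ∈ nearestSet X i then ((nearestSet X i).card : ℝ)⁻¹ else 0)
  else Real.exp (-‖X i - X j‖ ^ 2 / (2 * σ ^ 2)) /
      ∑ l ∈ Finset.univ.erase i, Real.exp (-‖X i - X l‖ ^ 2 / (2 * σ ^ 2))

/-- Base-2 Shannon entropy of a distribution on `Fin n`. -/
def entropy2 (p : Fin n → ℝ) : ℝ := -∑ j, p j * Real.logb 2 (p j)

/-- `σ` is a perplexity-`ρ`-calibrated bandwidth for point `i`: it is nonnegative and
minimizes the gap between the entropy of `P_{·|i}(X;σ)` and `log₂ ρ`. -/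
def IsCalibrated [NormedAddCommGroup E] (X : Fin n → E) (ρ : ℝ) (i : Fin n) (σ : ℝ) : Prop :=
  0 ≤ σ ∧ ∀ σ' : ℝ, 0 ≤ σ' →
    |entropy2 (condAffinity X σ i) - Real.logb 2 ρ| ≤
      |entropy2 (condAffinity X σ' i) - Real.logb 2 ρ|

/-- The calibrated bandwidth `σ_i^*` (well defined by uniqueness of the minimizer). -/
def sigmaStar [NormedAddCommGroup E] (X : Fin n → E) (ρ : ℝ) (i : Fin n) : ℝ :=
  Classical.epsilon (IsCalibrated X ρ i)

/-- Symmetrized input affinity `P_{ij}(X)`. -/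
def inAffinity [NormedAddCommGroup E] (X : Fin n → E) (ρ : ℝ) (i j : Fin n) : ℝ :=
  if i = j then 0
  else (condAffinity X (sigmaStar X ρ j) j i + condAffinity X (sigmaStar X ρ i) i j) / (2 * n)

/-- Output affinity `Q_{ij}(Y)`. -/
def outAffinity [NormedAddCommGroup F] (Y : Fin n → F) (i j : Fin n) : ℝ :=
  if i = j then 0
  else (1 + ‖Y i - Y j‖ ^ 2)⁻¹ /
    ∑ p ∈ Finset.univ.offDiag, (1 + ‖Y p.1 - Y p.2‖ ^ 2)⁻¹

/-- The t-SNE loss `L_X(Y) = KL(P(X) ‖ Q(Y))`. -/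
def tsneLoss {d : ℕ} [NormedAddCommGroup E] (X : Fin n → E) (ρ : ℝ)
    (Y : Fin n → EuclideanSpace ℝ (Fin d)) : ℝ :=
  ∑ p ∈ Finset.univ.offDiag,
    inAffinity X ρ p.1 p.2 * Real.log (inAffinity X ρ p.1 p.2 / outAffinity Y p.1 p.2)

/-- The set of stationary t-SNE outputs in `ℝ^d` for input `X` and perplexity `ρ`. -/
def TSNE [NormedAddCommGroup E] (d : ℕ) (ρ : ℝ) (X : Fin n → E) :
    Set (Fin n → EuclideanSpace ℝ (Fin d)) :=
  {Y : Fin n → EuclideanSpace ℝ (Fin d) | fderiv ℝ (tsneLoss X ρ) Y = 0}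

/-- The image of t-SNE: all stationary outputs over all `n`-point inputs in `ℝ^{n-1}`. -/
def IMTSNE (n d : ℕ) (ρ : ℝ) : Set (Fin n → EuclideanSpace ℝ (Fin d)) :=
  ⋃ X : Fin n → EuclideanSpace ℝ (Fin (n - 1)), TSNE d ρ X

/-- The `m`-th cluster of the partition of `[n]` encoded by the labelling `ℓ`. -/
def cluster (ℓ : Fin n → Fin k) (m : Fin k) : Finset (Fin n) :=
  Finset.univ.filter fun i => ℓ i = m

/-- Average within-cluster distance `a(i)`. -/
def aScore [NormedAddCommGroup E] (X : Fin n → E) (ℓ : Fin n → Fin k) (i : Fin n) : ℝ :=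
  (∑ j ∈ cluster ℓ (ℓ i), ‖X i - X j‖) / (((cluster ℓ (ℓ i)).card : ℝ) - 1)

/-- Closest average across-cluster distance `b(i)`. -/
def bScore [NormedAddCommGroup E] (X : Fin n → E) (ℓ : Fin n → Fin k) (i : Fin n) : ℝ :=
  sInf {r : ℝ | ∃ m : Fin k, m ≠ ℓ i ∧
    r = (∑ j ∈ cluster ℓ m, ‖X i - X j‖) / ((cluster ℓ m).card : ℝ)}

/-- Silhouette score of point `i`. -/
def silhouette [NormedAddCommGroup E] (X : Fin n → E) (ℓ : Fin n → Fin k) (i : Fin n) : ℝ :=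
  if (cluster ℓ (ℓ i)).card = 1 then 0
  else (bScore X ℓ i - aScore X ℓ i) / max (aScore X ℓ i) (bScore X ℓ i)

/-- Average silhouette score `S̄(X; C₁,…,C_k)`. -/
def avgSilhouette [NormedAddCommGroup E] (X : Fin n → E) (ℓ : Fin n → Fin k) : ℝ :=
  (∑ i, silhouette X ℓ i) / (n : ℝ)

/-- Centroid `E(S)` of the points indexed by `S`. -/
def centroid [NormedAddCommGroup E] [NormedSpace ℝ E] (X : Fin n → E)
    (S : Finset (Fin n)) : E :=
  ((S.card : ℝ))⁻¹ • ∑ i ∈ S, X i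

/-- Numerator (between-cluster term) of the Calinski–Harabasz index. -/
def chNum [NormedAddCommGroup E] [NormedSpace ℝ E] (X : Fin n → E) (ℓ : Fin n → Fin k) : ℝ :=
  ((k : ℝ) - 1)⁻¹ *
    ∑ m : Fin k, ((cluster ℓ m).card : ℝ) *
      ‖centroid X (cluster ℓ m) - centroid X Finset.univ‖ ^ 2

/-- Denominator (within-cluster term) of the Calinski–Harabasz index. -/
def chDen [NormedAddCommGroup E] [NormedSpace ℝ E] (X : Fin n → E) (ℓ : Fin n → Fin k) : ℝ :=
  ((n : ℝ) - (k : ℝ))⁻¹ *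
    ∑ m : Fin k, ∑ i ∈ cluster ℓ m, ‖X i - centroid X (cluster ℓ m)‖ ^ 2

/-- Calinski–Harabasz index, valued in `[0,∞]`, with the conventions `CH = 1` when both
numerator and denominator vanish and `CH = ∞` when only the denominator vanishes. -/
def CHindex [NormedAddCommGroup E] [NormedSpace ℝ E] (X : Fin n → E) (ℓ : Fin n → Fin k) :
    EReal :=
  if chDen X ℓ = 0 then (if chNum X ℓ = 0 then 1 else ⊤)
  else ((chNum X ℓ / chDen X ℓ : ℝ) : EReal)

/-- Minimum between-cluster distance (numerator of the Dunn index). -/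
def diNum [NormedAddCommGroup E] (X : Fin n → E) (ℓ : Fin n → Fin k) : ℝ :=
  sInf {r : ℝ | ∃ i j : Fin n, ℓ i ≠ ℓ j ∧ r = ‖X i - X j‖}

/-- Maximum within-cluster distance (denominator of the Dunn index). -/
def diDen [NormedAddCommGroup E] (X : Fin n → E) (ℓ : Fin n → Fin k) : ℝ :=
  sSup {r : ℝ | ∃ i j : Fin n, ℓ i = ℓ j ∧ r = ‖X i - X j‖}

/-- Dunn index, valued in `[0,∞]`, with the conventions `DI = 1` when both numerator and
denominator vanish and `DI = ∞` when only the denominator vanishes. -/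
def DIindex [NormedAddCommGroup E] (X : Fin n → E) (ℓ : Fin n → Fin k) : EReal :=
  if diDen X ℓ = 0 then (if diNum X ℓ = 0 then 1 else ⊤)
  else ((diNum X ℓ / diDen X ℓ : ℝ) : EReal)

/-- `Y` is an `(α, Y i₀)`-outlier configuration: there is a hyperplane (with unit normal `v`)
separating `Y i₀` from the remaining points with margin width at least
`α · max{1, diam(Y ∖ {Y i₀})}`. -/
def IsOutlierConfig [NormedAddCommGroup F] [InnerProductSpace ℝ F] (Y : Fin n → F)
    (i0 : Fin n) (α : ℝ) : Prop :=
  0 < α ∧ ∃ v : F, ‖v‖ = 1 ∧ ∀ i : Fin n, i ≠ i0 →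
    α * max 1 (Metric.diam (Y '' {i : Fin n | i ≠ i0})) ≤ ⟪Y i - Y i0, v⟫

/-- The outlier number `α(Y, y₀)`: the largest `α` for which `Y` is an `(α, Y i₀)`-outlier
configuration (`0` if there is none). -/
def outlierNumber [NormedAddCommGroup F] [InnerProductSpace ℝ F] (Y : Fin n → F)
    (i0 : Fin n) : ℝ :=
  sSup {α : ℝ | IsOutlierConfig Y i0 α}


/-! ### Auxiliary lemmas for `perturb_hammer` -/

lemma euclid_norm_sq {ι : Type*} [Fintype ι] (x : EuclideanSpace ℝ ι) :
    ‖x‖ ^ 2 = ∑ i, x i ^ 2 := by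
  rw [EuclideanSpace.norm_eq, Real.sq_sqrt (by positivity)]
  simp [sq_abs]

/-- Any `n` points in a finite-dimensional real inner product space can be isometrically
realized in `ℝ^{n-1}`. -/
lemma exists_embed {E : Type*} [NormedAddCommGroup E] [InnerProductSpace ℝ E]
    [FiniteDimensional ℝ E] {n : ℕ} (hn : 0 < n) (w : Fin n → E) :
    ∃ z : Fin n → EuclideanSpace ℝ (Fin (n - 1)), ∀ i j, ‖z i - z j‖ = ‖w i - w j‖ := by
  classical
  set i0 : Fin n := ⟨0, hn⟩ with hi0
  set v : Fin n → E := fun i => w i - w i0 with hv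
  set u : Fin (n - 1) → E := fun t => w ⟨t.1 + 1, by have := t.2; omega⟩ - w i0 with hu
  set S : Submodule ℝ E := Submodule.span ℝ (Set.range u) with hS
  have hvS : ∀ i, v i ∈ S := by
    intro i
    rcases Nat.eq_zero_or_pos i.1 with h0 | hpos
    · have hii : i = i0 := Fin.ext h0
      simp [hv, hii]
    · have hlt : i.1 - 1 < n - 1 := by have := i.2; omega
      have : v i = u ⟨i.1 - 1, hlt⟩ := by
        simp only [hv, hu]
        congr 2
        ext
        simp
        omega
      rw [this]
      exact Submodule.subset_span (Set.mem_range_self _)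
  have hm : Module.finrank ℝ S ≤ n - 1 := by
    have h1 := finrank_range_le_card (R := ℝ) u
    simpa [Set.finrank, Set.Finite.toFinset, hS] using h1
  set m := Module.finrank ℝ S with hmdef
  let B := stdOrthonormalBasis ℝ S
  let a : Fin n → EuclideanSpace ℝ (Fin m) := fun i => B.repr ⟨v i, hvS i⟩
  set z : Fin n → EuclideanSpace ℝ (Fin (n - 1)) :=
    fun i => WithLp.toLp 2 fun r => if h : (r : ℕ) < m then a i ⟨r, h⟩ else 0 with hz
  have hsum : ∀ b : EuclideanSpace ℝ (Fin m),
      ∑ r : Fin (n - 1), (if h : (r : ℕ) < m then b ⟨r, h⟩ else 0) ^ 2 = ∑ s : Fin m, b s ^ 2 := by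
    intro b
    have hinj : Function.Injective (Fin.castLE hm) := Fin.castLE_injective hm
    have h1 : ∑ s : Fin m, b s ^ 2 = ∑ r ∈ Finset.univ.image (Fin.castLE hm),
        (if h : (r : ℕ) < m then b ⟨r, h⟩ else 0) ^ 2 := by
      rw [Finset.sum_image (fun x _ y _ hxy => hinj hxy)]
      refine Finset.sum_congr rfl fun s _ => ?_
      have hlt : ((Fin.castLE hm s : Fin (n - 1)) : ℕ) < m := s.2
      rw [dif_pos hlt]
      rfl
    rw [h1]
    refine (Finset.sum_subset (Finset.subset_univ _) ?_).symm
    intro r _ hr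
    have hnot : ¬ (r : ℕ) < m := by
      intro hlt
      exact hr (Finset.mem_image.mpr ⟨⟨r, hlt⟩, Finset.mem_univ _, rfl⟩)
    rw [dif_neg hnot]
    norm_num
  refine ⟨z, ?_⟩
  intro i j
  have hcoord : ∀ r : Fin (n - 1),
      (z i - z j) r = if h : (r : ℕ) < m then (a i - a j) ⟨r, h⟩ else 0 := by
    intro r
    have hr : (z i - z j) r = z i r - z j r := rfl
    rw [hr, hz]
    by_cases h : (r : ℕ) < m
    · simp only [dif_pos h]
      rfl
    · simp only [dif_neg h, sub_zero]
  have hsq : ‖z i - z j‖ ^ 2 = ‖w i - w j‖ ^ 2 := by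
    rw [euclid_norm_sq]
    calc ∑ r : Fin (n - 1), ((z i - z j) r) ^ 2
        = ∑ r : Fin (n - 1), (if h : (r : ℕ) < m then (a i - a j) ⟨r, h⟩ else 0) ^ 2 :=
          Finset.sum_congr rfl fun r _ => by rw [hcoord r]
      _ = ∑ s : Fin m, ((a i - a j) s) ^ 2 := hsum _
      _ = ‖a i - a j‖ ^ 2 := (euclid_norm_sq _).symm
      _ = ‖w i - w j‖ ^ 2 := by
          have h1 : a i - a j = B.repr (⟨v i, hvS i⟩ - ⟨v j, hvS j⟩) := by
            simp only [a, map_sub]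
          rw [h1, B.repr.norm_map]
          have h2 : ‖(⟨v i, hvS i⟩ - ⟨v j, hvS j⟩ : S)‖ = ‖v i - v j‖ := rfl
          rw [h2]
          have h3 : v i - v j = w i - w j := by simp [hv]
          rw [h3]
  calc ‖z i - z j‖ = Real.sqrt (‖z i - z j‖ ^ 2) := (Real.sqrt_sq (norm_nonneg _)).symm
    _ = Real.sqrt (‖w i - w j‖ ^ 2) := by rw [hsq]
    _ = ‖w i - w j‖ := Real.sqrt_sq (norm_nonneg _)

/-- Shifting all squared interpoint distances by a constant `c ≥ 0` is realizable in
`ℝ^{n-1}`. -/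
lemma exists_shift {n : ℕ} (hn : 0 < n) (X₀ : Fin n → EuclideanSpace ℝ (Fin (n - 1)))
    {c : ℝ} (hc : 0 ≤ c) :
    ∃ X : Fin n → EuclideanSpace ℝ (Fin (n - 1)),
      ∀ i j, i ≠ j → ‖X i - X j‖ ^ 2 = ‖X₀ i - X₀ j‖ ^ 2 + c := by
  classical
  set q : ℝ := Real.sqrt (c / 2) with hq
  set w : Fin n → EuclideanSpace ℝ (Fin (n - 1) ⊕ Fin n) := fun i =>
    WithLp.toLp 2 (Sum.elim (X₀ i) (fun s => if s = i then q else 0)) with hw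
  have hwd : ∀ i j, i ≠ j → ‖w i - w j‖ ^ 2 = ‖X₀ i - X₀ j‖ ^ 2 + c := by
    intro i j hij
    rw [euclid_norm_sq]
    have hcoord : ∀ t, (w i - w j) t = w i t - w j t := fun t => rfl
    calc ∑ t, ((w i - w j) t) ^ 2 = ∑ t, (w i t - w j t) ^ 2 := by
          refine Finset.sum_congr rfl fun t _ => by rw [hcoord]
      _ = (∑ a : Fin (n - 1), (w i (Sum.inl a) - w j (Sum.inl a)) ^ 2)
          + ∑ s : Fin n, (w i (Sum.inr s) - w j (Sum.inr s)) ^ 2 := Fintype.sum_sum_type _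
      _ = ‖X₀ i - X₀ j‖ ^ 2 + c := by
          have hleft : (∑ a : Fin (n - 1), (w i (Sum.inl a) - w j (Sum.inl a)) ^ 2)
              = ‖X₀ i - X₀ j‖ ^ 2 := by
            rw [euclid_norm_sq]
            refine Finset.sum_congr rfl fun a _ => ?_
            have : (X₀ i - X₀ j) a = X₀ i a - X₀ j a := rfl
            rw [this]
            rfl
          have hright : (∑ s : Fin n, (w i (Sum.inr s) - w j (Sum.inr s)) ^ 2) = c := by
            have hterm : ∀ s : Fin n, (w i (Sum.inr s) - w j (Sum.inr s)) ^ 2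
                = (if s = i then q ^ 2 else 0) + (if s = j then q ^ 2 else 0) := by
              intro s
              simp only [hw, Sum.elim_inr]
              by_cases hsi : s = i
              · have hsj : ¬ s = j := by rw [hsi]; exact hij
                rw [if_pos hsi, if_pos hsi, if_neg hsj, if_neg hsj]
                ring
              · rw [if_neg hsi, if_neg hsi]
                by_cases hsj : s = j
                · rw [if_pos hsj, if_pos hsj]
                  ring
                · rw [if_neg hsj, if_neg hsj]
                  ring
            rw [Finset.sum_congr rfl fun s _ => hterm s, Finset.sum_add_distrib]
            have hq2 : q ^ 2 = c / 2 := Real.sq_sqrt (by linarith)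
            simp [Finset.sum_ite_eq', hq2]
          rw [hleft, hright]
  obtain ⟨z, hz⟩ := exists_embed hn w
  exact ⟨z, fun i j hij => by rw [← hwd i j hij, ← hz i j]⟩

/-- `condAffinity` is invariant under shifting all squared interpoint distances by `c ≥ 0`. -/
lemma condAffinity_shift [NormedAddCommGroup E] {Z X : Fin n → E} {c : ℝ} (hc : 0 ≤ c)
    (h : ∀ i j, i ≠ j → ‖Z i - Z j‖ ^ 2 = ‖X i - X j‖ ^ 2 + c) :
    condAffinity Z = condAffinity X := by
  classical
  have key : ∀ i a b : Fin n, a ≠ i → b ≠ i →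
      (‖Z i - Z a‖ ≤ ‖Z i - Z b‖ ↔ ‖X i - X a‖ ≤ ‖X i - X b‖) := by
    intro i a b ha hb
    have h1 := h i a (Ne.symm ha)
    have h2 := h i b (Ne.symm hb)
    have sqle : ∀ x y : ℝ, 0 ≤ x → 0 ≤ y → x ^ 2 ≤ y ^ 2 → x ≤ y := by
      intro x y hx hy hxy
      nlinarith
    constructor
    · intro hle
      have hzz : ‖Z i - Z a‖ ^ 2 ≤ ‖Z i - Z b‖ ^ 2 :=
        pow_le_pow_left₀ (norm_nonneg _) hle 2
      exact sqle _ _ (norm_nonneg _) (norm_nonneg _) (by linarith)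
    · intro hle
      have hxx : ‖X i - X a‖ ^ 2 ≤ ‖X i - X b‖ ^ 2 :=
        pow_le_pow_left₀ (norm_nonneg _) hle 2
      exact sqle _ _ (norm_nonneg _) (norm_nonneg _) (by linarith)
  have hnear : ∀ i, nearestSet Z i = nearestSet X i := by
    intro i
    ext j
    simp only [nearestSet, Finset.mem_filter, Finset.mem_erase, Finset.mem_univ, and_true]
    constructor
    · rintro ⟨hji, hmin⟩
      exact ⟨hji, fun l hl => (key i j l hji hl).mp (hmin l hl)⟩
    · rintro ⟨hji, hmin⟩
      exact ⟨hji, fun l hl => (key i j l hji hl).mpr (hmin l hl)⟩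
  funext σ i j
  unfold condAffinity
  by_cases hji : j = i
  · simp [hji]
  by_cases hσ : σ = 0
  · simp [hji, hσ, hnear i]
  · simp only [if_neg hji, if_neg hσ]
    have ht : (2 : ℝ) * σ ^ 2 ≠ 0 := by positivity
    have hkey : ∀ a : Fin n, a ≠ i →
        Real.exp (-‖Z i - Z a‖ ^ 2 / (2 * σ ^ 2))
        = Real.exp (-c / (2 * σ ^ 2)) * Real.exp (-‖X i - X a‖ ^ 2 / (2 * σ ^ 2)) := by
      intro a ha
      rw [← Real.exp_add]
      congr 1
      rw [h i a (Ne.symm ha)]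
      field_simp
      ring
    rw [hkey j hji]
    rw [Finset.sum_congr rfl fun l hl => hkey l (Finset.ne_of_mem_erase hl)]
    rw [← Finset.mul_sum, mul_div_mul_left _ _ (Real.exp_ne_zero _)]

/-- Equal conditional affinities give equal stationary sets. -/
lemma TSNE_congr [NormedAddCommGroup E] {Z X : Fin n → E}
    (h : condAffinity Z = condAffinity X) (d : ℕ) (ρ : ℝ) :
    TSNE (n := n) d ρ Z = TSNE d ρ X := by
  have h1 : IsCalibrated Z = IsCalibrated X := by
    funext ρ' i σ
    unfold IsCalibrated
    rw [h]
  have h2 : sigmaStar Z = sigmaStar X := by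
    funext ρ' i
    unfold sigmaStar
    rw [h1]
  have h3 : inAffinity Z = inAffinity X := by
    funext ρ' i j
    unfold inAffinity
    rw [h, h2]
  have h4 : tsneLoss (d := d) Z ρ = tsneLoss X ρ := by
    funext Y
    unfold tsneLoss
    rw [h3]
  unfold TSNE
  rw [h4]

lemma ratio_bounds {ε a b c : ℝ} (hε : 0 < ε) (ha : 0 ≤ a) (hb : 0 ≤ b) (hc : 0 < c)
    (hac : a ≤ ε * c) (hbc : b ≤ ε * c) :
    1 - ε ≤ (a + c) / (b + c) ∧ (a + c) / (b + c) ≤ 1 + ε := by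
  have hbc0 : 0 < b + c := by linarith
  constructor
  · rw [le_div_iff₀ hbc0]
    nlinarith [mul_nonneg hε.le hb]
  · rw [div_le_iff₀ hbc0]
    nlinarith [mul_nonneg hε.le hb, mul_nonneg hε.le hc.le]

/-- Theorem `perturbhammer`: any two stationary t-SNE outputs can be produced
by inputs whose squared interpoint distances agree up to a factor of `1 ± ε`. -/
theorem perturb_hammer (n d : ℕ) (hn : 2 < n) (hd : 1 ≤ d)
    (ρ : ℝ) (hρ : 1 < ρ) (hρ' : ρ < (n : ℝ) - 1) :
    ∀ ε : ℝ, 0 < ε → ∀ Y Y' : Fin n → EuclideanSpace ℝ (Fin d),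
      Y ∈ IMTSNE n d ρ → Y' ∈ IMTSNE n d ρ →
      ∃ X X' : Fin n → EuclideanSpace ℝ (Fin (n - 1)),
        (∀ i j : Fin n, i ≠ j →
          1 - ε ≤ ‖X i - X j‖ ^ 2 / ‖X' i - X' j‖ ^ 2 ∧
          ‖X i - X j‖ ^ 2 / ‖X' i - X' j‖ ^ 2 ≤ 1 + ε) ∧
        Y ∈ TSNE d ρ X ∧ Y' ∈ TSNE d ρ X' := by
  intro ε hε Y Y' hY hY'
  rw [IMTSNE, Set.mem_iUnion] at hY hY'
  obtain ⟨X₀, hX₀⟩ := hY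
  obtain ⟨X₀', hX₀'⟩ := hY'
  classical
  obtain ⟨S, hSdef⟩ : ∃ S : ℝ, S = ∑ p ∈ Finset.univ.offDiag,
      (‖X₀ p.1 - X₀ p.2‖ ^ 2 + ‖X₀' p.1 - X₀' p.2‖ ^ 2) := ⟨_, rfl⟩
  have hS : 0 ≤ S := by
    rw [hSdef]
    exact Finset.sum_nonneg fun p _ => by positivity
  obtain ⟨c, hcdef⟩ : ∃ c : ℝ, c = (1 + S) / ε := ⟨_, rfl⟩
  have hc : 0 < c := by rw [hcdef]; positivity
  have hεc : ε * c = 1 + S := by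
    rw [hcdef]
    field_simp
  have hbound : ∀ i j : Fin n, i ≠ j →
      ‖X₀ i - X₀ j‖ ^ 2 ≤ ε * c ∧ ‖X₀' i - X₀' j‖ ^ 2 ≤ ε * c := by
    intro i j hij
    have hmem : (i, j) ∈ Finset.univ.offDiag := by
      simp [Finset.mem_offDiag, hij]
    have hle : ‖X₀ i - X₀ j‖ ^ 2 + ‖X₀' i - X₀' j‖ ^ 2 ≤ S := by
      rw [hSdef]
      have h := Finset.single_le_sum (f := fun p : Fin n × Fin n =>
        ‖X₀ p.1 - X₀ p.2‖ ^ 2 + ‖X₀' p.1 - X₀' p.2‖ ^ 2)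
        (fun p _ => by positivity) hmem
      simpa using h
    have h1 : (0:ℝ) ≤ ‖X₀' i - X₀' j‖ ^ 2 := sq_nonneg _
    have h2 : (0:ℝ) ≤ ‖X₀ i - X₀ j‖ ^ 2 := sq_nonneg _
    constructor
    · linarith
    · linarith
  have hn0 : 0 < n := by omega
  obtain ⟨X, hXd⟩ := exists_shift hn0 X₀ hc.le
  obtain ⟨X', hXd'⟩ := exists_shift hn0 X₀' hc.le
  refine ⟨X, X', ?_, ?_, ?_⟩
  · intro i j hij
    obtain ⟨ha, hb⟩ := hbound i j hij
    have hXij := hXd i j hij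
    have hXij' := hXd' i j hij
    rw [hXij, hXij']
    exact ratio_bounds hε (sq_nonneg _) (sq_nonneg _) hc ha hb
  · rw [TSNE_congr (condAffinity_shift hc.le hXd) d ρ]
    exact hX₀
  · rw [TSNE_congr (condAffinity_shift hc.le hXd') d ρ]
    exact hX₀'

end TSNEPaper
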